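/- Let G = (V,E) be a finite simple graph, let R be a commutative ring, let v : E → R be edge weights, and let i, j ∈ V with i ≠ j. Then C_G(v) = Σ_{W ⊆ V, i ∈ W, j ∉ W} [ ∏_{e ∈ E(W,j)} (1 + v_e) - 1 ] · C_{G[W]}(v) · C_{G[V∖W]}(v), where E(W,j) denotes the set of edges of G with one endpoint in W and the other endpoint equal to j. -/
import Mathlib


open Finset SimpleGraph

/-- The number of connected components of the graph on the vertex set `W`
with edge set `A` (isolated vertices count as components). -/
noncomputable def kcomp {V : Type*} [Fintype V] [DecidableEq V]
    (W : Finset V) (A : Finset (Sym2 V)) : ℕ :=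
  Nat.card ((SimpleGraph.fromEdgeSet (A : Set (Sym2 V))).induce (W : Set V)).ConnectedComponent

/-- The edges of `G` with both endpoints in `W`, i.e. the edges of the
induced subgraph `G[W]`. -/
def edgesWithin {V : Type*} [Fintype V] [DecidableEq V]
    (G : SimpleGraph V) [DecidableRel G.Adj] (W : Finset V) : Finset (Sym2 V) :=
  G.edgeFinset.filter (fun e => ∀ x ∈ e, x ∈ W)

/-- The multivariate Tutte polynomial of the induced subgraph `G[W]`:
`Z_{G[W]}(q,v) = Σ_{A ⊆ E(G[W])} q^{k(A)} ∏_{e ∈ A} v_e`. -/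
noncomputable def Zmv {V : Type*} [Fintype V] [DecidableEq V] {R : Type*} [CommRing R]
    (G : SimpleGraph V) [DecidableRel G.Adj] (W : Finset V) (q : R) (v : Sym2 V → R) : R :=
  ∑ A ∈ (edgesWithin G W).powerset, q ^ kcomp W A * ∏ e ∈ A, v e

/-- `Ẑ_{G[W]}(q,v) = Σ_{A ⊆ E(G[W])} q^{k(A)-1} ∏_{e ∈ A} v_e`. -/
noncomputable def ZhatMv {V : Type*} [Fintype V] [DecidableEq V] {R : Type*} [CommRing R]
    (G : SimpleGraph V) [DecidableRel G.Adj] (W : Finset V) (q : R) (v : Sym2 V → R) : R :=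
  ∑ A ∈ (edgesWithin G W).powerset, q ^ (kcomp W A - 1) * ∏ e ∈ A, v e

/-- The generating polynomial of connected spanning subgraphs of `G[W]`:
`C_{G[W]}(v) = Σ_{A ⊆ E(G[W]) : k(A)=1} ∏_{e ∈ A} v_e`. -/
noncomputable def Cmv {V : Type*} [Fintype V] [DecidableEq V] {R : Type*} [CommRing R]
    (G : SimpleGraph V) [DecidableRel G.Adj] (W : Finset V) (v : Sym2 V → R) : R :=
  ∑ A ∈ (edgesWithin G W).powerset.filter (fun A => kcomp W A = 1), ∏ e ∈ A, v e

/-- The edges of `G` with one endpoint in `W` and the other endpoint equal to `j`. -/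
def edgesTo {V : Type*} [Fintype V] [DecidableEq V]
    (G : SimpleGraph V) [DecidableRel G.Adj] (W : Finset V) (j : V) : Finset (Sym2 V) :=
  G.edgeFinset.filter (fun e => ∃ x ∈ W, e = s(x, j))

section Aux
variable {V : Type*} [Fintype V] [DecidableEq V]

private abbrev HE (A : Finset (Sym2 V)) : SimpleGraph V :=
  SimpleGraph.fromEdgeSet (↑A : Set (Sym2 V))

private lemma he_adj {A : Finset (Sym2 V)} {a b : V} :
    (HE A).Adj a b ↔ s(a, b) ∈ A ∧ a ≠ b := by
  simp [HE, SimpleGraph.fromEdgeSet_adj]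

private lemma reach_transfer {A A' : Finset (Sym2 V)} {S : Set V}
    (h : ∀ a b : V, s(a, b) ∈ A → a ≠ b → a ∈ S → b ∈ S ∧ s(a, b) ∈ A') :
    ∀ {x y : V}, (HE A).Walk x y → x ∈ S → (HE A').Reachable x y ∧ y ∈ S := by
  intro x y p
  induction p with
  | nil => exact fun hx => ⟨.refl _, hx⟩
  | @cons a b c hadj p ih =>
    intro ha
    obtain ⟨he, hne⟩ := he_adj.mp hadj
    obtain ⟨hb, he'⟩ := h a b he hne ha
    obtain ⟨hr, hc⟩ := ih hb
    exact ⟨(he_adj.mpr ⟨he', hne⟩).reachable.trans hr, hc⟩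

private lemma walk_induce {A : Finset (Sym2 V)} {W : Finset V}
    (hA : ∀ e ∈ A, ∀ x ∈ e, x ∈ W) :
    ∀ {x y : V} (p : (HE A).Walk x y) (hx : x ∈ W),
      ∃ hy : y ∈ W, ((HE A).induce (↑W : Set V)).Reachable ⟨x, hx⟩ ⟨y, hy⟩ := by
  intro x y p
  induction p with
  | nil => exact fun hx => ⟨hx, .refl _⟩
  | @cons a b c hadj p ih =>
    intro ha
    obtain ⟨he, hne⟩ := he_adj.mp hadj
    have hb : b ∈ W := hA _ he b (Sym2.mem_mk_right a b)
    obtain ⟨hc, hr⟩ := ih hb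
    refine ⟨hc, .trans (SimpleGraph.Adj.reachable ?_) hr⟩
    exact SimpleGraph.comap_adj.mpr hadj

private lemma kcomp_eq_one_iff {W : Finset V} {A : Finset (Sym2 V)}
    (hA : ∀ e ∈ A, ∀ x ∈ e, x ∈ W) :
    kcomp W A = 1 ↔ W.Nonempty ∧ ∀ x ∈ W, ∀ y ∈ W, (HE A).Reachable x y := by
  rw [kcomp, Nat.card_eq_one_iff_unique]
  constructor
  · rintro ⟨hsub, hne⟩
    obtain ⟨c⟩ := hne
    obtain ⟨⟨x, hx⟩, -⟩ := Quot.exists_rep c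
    refine ⟨⟨x, Finset.mem_coe.mp hx⟩, fun a ha b hb => ?_⟩
    have hcc :((HE A).induce (↑W : Set V)).connectedComponentMk ⟨a, Finset.mem_coe.mpr ha⟩
        = ((HE A).induce (↑W : Set V)).connectedComponentMk ⟨b, Finset.mem_coe.mpr hb⟩ :=
      hsub.elim _ _
    have := SimpleGraph.ConnectedComponent.eq.mp hcc
    exact this.map (SimpleGraph.Embedding.induce (↑W : Set V)).toHom
  · rintro ⟨⟨x0, hx0⟩, hr⟩
    constructor
    · constructor
      intro c d
      obtain ⟨⟨a, ha⟩, rfl⟩ := Quot.exists_rep c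
      obtain ⟨⟨b, hb⟩, rfl⟩ := Quot.exists_rep d
      obtain ⟨p⟩ := hr a (Finset.mem_coe.mp ha) b (Finset.mem_coe.mp hb)
      obtain ⟨hb', hri⟩ := walk_induce hA p (Finset.mem_coe.mp ha)
      exact SimpleGraph.ConnectedComponent.sound hri
    · exact ⟨((HE A).induce (↑W : Set V)).connectedComponentMk ⟨x0, Finset.mem_coe.mpr hx0⟩⟩

private lemma reach_hub {A A2 : Finset (Sym2 V)} {W : Finset V} {j : V}
    (hcl : ∀ a b : V, s(a, b) ∈ A → a ∈ W → b ∉ W → b = j)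
    (hA2 : ∀ e ∈ A, (∀ x ∈ e, x ∉ W) → e ∈ A2) :
    ∀ {x y : V}, (HE A).Walk x y → x ∉ W → y = j → (HE A2).Reachable x j := by
  intro x y p
  induction p with
  | nil => rintro hx rfl; exact .refl _
  | @cons a b c hadj p ih =>
    intro ha hc
    obtain ⟨he, hne⟩ := he_adj.mp hadj
    by_cases hb : b ∈ W
    · have haj : a = j := hcl b a (by rwa [Sym2.eq_swap]) hb ha
      exact haj ▸ .refl _
    · have he2 : s(a, b) ∈ A2 := hA2 _ he (by
        intro x hx
        rcases Sym2.mem_iff.mp hx with rfl | rfl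
        · exact ha
        · exact hb)
      exact (he_adj.mpr ⟨he2, hne⟩).reachable.trans (ih hb hc)

private lemma exists_bridge {A : Finset (Sym2 V)} {W : Finset V} {j : V} (hjW : j ∉ W)
    (hcl : ∀ a b : V, s(a, b) ∈ A → a ∈ W → b ∉ W → b = j) :
    ∀ {x y : V}, (HE A).Walk x y → x ∈ W → y = j → ∃ w ∈ W, s(w, j) ∈ A := by
  intro x y p
  induction p with
  | nil => rintro hx rfl; exact absurd hx hjW
  | @cons a b c hadj p ih =>
    intro ha hc
    obtain ⟨he, hne⟩ := he_adj.mp hadj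
    by_cases hb : b ∈ W
    · exact ih hb hc
    · have hbj : b = j := hcl a b he ha hb
      exact ⟨a, ha, hbj ▸ he⟩

private lemma not_reach_of_isolated {A : Finset (Sym2 V)} {i j : V} (hij : i ≠ j)
    (h : ∀ e ∈ A, j ∉ e) : ¬ (HE A).Reachable i j := by
  intro hr
  obtain ⟨p⟩ := hr.symm
  cases p with
  | nil => exact hij rfl
  | cons hadj _ =>
    obtain ⟨he, -⟩ := he_adj.mp hadj
    exact h _ he (Sym2.mem_mk_left _ _)

end Aux
section Aux2
variable {V : Type*} [Fintype V] [DecidableEq V]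

private lemma sym2_exists_mem (e : Sym2 V) : ∃ x, x ∈ e :=
  Sym2.ind (fun a b => ⟨a, Sym2.mem_mk_left a b⟩) e

/-- the vertex set of the connected component of `i` after deleting all
edges containing `j`. -/
private noncomputable def Wof (i j : V) (A : Finset (Sym2 V)) : Finset V :=
  @Finset.filter _
    (fun x => (HE (A.filter (fun e => j ∉ e))).Reachable i x)
    (Classical.decPred _) Finset.univ

private lemma mem_Wof {i j : V} {A : Finset (Sym2 V)} {x : V} :
    x ∈ Wof i j A ↔ (HE (A.filter (fun e => j ∉ e))).Reachable i x := by
  simp [Wof]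

/-- edges of `A` joining `W` to `j`. -/
private def Bf (W : Finset V) (j : V) (A : Finset (Sym2 V)) : Finset (Sym2 V) :=
  A.filter (fun e => ∃ x ∈ W, e = s(x, j))

/-- edges of `A` within `W`. -/
private def F1 (W : Finset V) (A : Finset (Sym2 V)) : Finset (Sym2 V) :=
  A.filter (fun e => ∀ x ∈ e, x ∈ W)

/-- edges of `A` avoiding `W`. -/
private def F2 (W : Finset V) (A : Finset (Sym2 V)) : Finset (Sym2 V) :=
  A.filter (fun e => ∀ x ∈ e, x ∉ W)

end Aux2
theorem stmt16 {V : Type*} [Fintype V] [DecidableEq V] {R : Type*} [CommRing R]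
    (G : SimpleGraph V) [DecidableRel G.Adj] (v : Sym2 V → R)
    (i j : V) (hij : i ≠ j) :
    Cmv G Finset.univ v
      = ∑ W ∈ Finset.univ.filter (fun W : Finset V => i ∈ W ∧ j ∉ W),
          ((∏ e ∈ edgesTo G W j, (1 + v e)) - 1) *
            Cmv G W v * Cmv G (Finset.univ \ W) v := by
  classical
  have hWofT : ∀ A ∈ (edgesWithin G Finset.univ).powerset.filter
      (fun A => kcomp Finset.univ A = 1),
      Wof i j A ∈ Finset.univ.filter (fun W : Finset V => i ∈ W ∧ j ∉ W) := by
    intro A _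
    rw [Finset.mem_filter]
    refine ⟨Finset.mem_univ _, mem_Wof.mpr (.refl _), fun hj => ?_⟩
    exact not_reach_of_isolated hij (fun e he => (Finset.mem_filter.mp he).2) (mem_Wof.mp hj)
  simp only [Cmv]
  rw [← Finset.sum_fiberwise_of_maps_to hWofT (fun A => ∏ e ∈ A, v e)]
  refine Finset.sum_congr rfl fun W hW => ?_
  obtain ⟨-, hiW, hjW⟩ := Finset.mem_filter.mp hW
  -- the forward decomposition facts
  have hfw : ∀ A ∈ Finset.filter (fun A => Wof i j A = W)
      ((edgesWithin G Finset.univ).powerset.filter (fun A => kcomp Finset.univ A = 1)),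
      (∀ a b : V, s(a, b) ∈ A → a ∈ W → b ∉ W → b = j) ∧ A ⊆ G.edgeFinset ∧
      (∀ x y : V, (HE A).Reachable x y) ∧
      (∀ x : V, x ∈ W ↔ (HE (A.filter (fun e => j ∉ e))).Reachable i x) ∧
      Bf W j A ∪ F1 W A ∪ F2 W A = A := by
    intro A hA
    obtain ⟨hA0, hWeq⟩ := Finset.mem_filter.mp hA
    obtain ⟨hAsub, hk⟩ := Finset.mem_filter.mp hA0
    rw [Finset.mem_powerset] at hAsub
    have hAE : A ⊆ G.edgeFinset := fun e he => (Finset.mem_filter.mp (hAsub he)).1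
    have hreachU : ∀ x y : V, (HE A).Reachable x y := by
      have := (kcomp_eq_one_iff (fun e _ x _ => Finset.mem_univ x)).mp hk
      exact fun x y => this.2 x (Finset.mem_univ x) y (Finset.mem_univ y)
    have hWch : ∀ x : V, x ∈ W ↔ (HE (A.filter (fun e => j ∉ e))).Reachable i x := by
      intro x; rw [← hWeq, mem_Wof]
    have hcl : ∀ a b : V, s(a, b) ∈ A → a ∈ W → b ∉ W → b = j := by
      intro a b he ha hb
      by_contra hbj
      have hjm : j ∉ s(a, b) := by
        rw [Sym2.mem_iff]; rintro (rfl | rfl)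
        · exact hjW ha
        · exact hbj rfl
      have hne : a ≠ b := fun h => hb (h ▸ ha)
      have hrb : (HE (A.filter (fun e => j ∉ e))).Reachable i b :=
        ((hWch a).mp ha).trans
          (he_adj.mpr ⟨Finset.mem_filter.mpr ⟨he, hjm⟩, hne⟩).reachable
      exact hb ((hWch b).mpr hrb)
    refine ⟨hcl, hAE, hreachU, hWch, ?_⟩
    ext e
    simp only [Finset.mem_union, Bf, F1, F2, Finset.mem_filter]
    constructor
    · rintro ((⟨h, -⟩ | ⟨h, -⟩) | ⟨h, -⟩) <;> exact h
    · revert e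
      refine Sym2.ind ?_
      intro a b he
      by_cases ha : a ∈ W <;> by_cases hb : b ∈ W
      · refine Or.inl (Or.inr ⟨he, ?_⟩)
        intro x hx
        rcases Sym2.mem_iff.mp hx with rfl | rfl
        · exact ha
        · exact hb
      · exact Or.inl (Or.inl ⟨he, a, ha, by rw [hcl a b he ha hb]⟩)
      · refine Or.inl (Or.inl ⟨he, b, hb, ?_⟩)
        have h2 := hcl b a (by rwa [Sym2.eq_swap]) hb ha
        rw [Sym2.eq_swap, h2]
      · refine Or.inr ⟨he, ?_⟩
        intro x hx
        rcases Sym2.mem_iff.mp hx with rfl | rfl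
        · exact ha
        · exact hb
  -- expand the RHS into a sum over triples
  have hprod : (∏ e ∈ edgesTo G W j, (1 + v e)) - 1
      = ∑ B ∈ (edgesTo G W j).powerset.erase ∅, ∏ e ∈ B, v e := by
    have h2 : (∏ e ∈ edgesTo G W j, (1 + v e))
        = ∑ B ∈ (edgesTo G W j).powerset, ∏ e ∈ B, v e := by
      rw [show (∏ e ∈ edgesTo G W j, (1 + v e)) = ∏ e ∈ edgesTo G W j, (v e + 1) from
        Finset.prod_congr rfl fun _ _ => add_comm _ _, Finset.prod_add]
      simp
    rw [h2, ← Finset.sum_erase_add _ _ (Finset.mem_powerset.mpr (Finset.empty_subset _))]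
    simp
  have hRHS : ((∏ e ∈ edgesTo G W j, (1 + v e)) - 1) *
        (∑ A ∈ (edgesWithin G W).powerset.filter (fun A => kcomp W A = 1), ∏ e ∈ A, v e) *
        (∑ A ∈ (edgesWithin G (Finset.univ \ W)).powerset.filter
            (fun A => kcomp (Finset.univ \ W) A = 1), ∏ e ∈ A, v e)
      = ∑ p ∈ ((edgesTo G W j).powerset.erase ∅) ×ˢ
          ((edgesWithin G W).powerset.filter (fun A => kcomp W A = 1) ×ˢ
           (edgesWithin G (Finset.univ \ W)).powerset.filter
              (fun A => kcomp (Finset.univ \ W) A = 1)),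
          (∏ e ∈ p.1, v e) * (∏ e ∈ p.2.1, v e) * (∏ e ∈ p.2.2, v e) := by
    rw [hprod, Finset.sum_product]
    simp only [Finset.sum_product, Finset.sum_mul, Finset.mul_sum]
    rw [Finset.sum_comm]
    exact Eq.trans (Finset.sum_congr rfl fun A1 _ => Finset.sum_comm) Finset.sum_comm
  rw [hRHS]
  refine Finset.sum_bij' (fun A _ => (Bf W j A, F1 W A, F2 W A))
    (fun p _ => p.1 ∪ p.2.1 ∪ p.2.2) ?_ ?_ ?_ ?_ ?_
  · -- forward membership
    intro A hA
    obtain ⟨hcl, hAE, hreachU, hWch, -⟩ := hfw A hA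
    refine Finset.mem_product.mpr ⟨?_, Finset.mem_product.mpr ⟨?_, ?_⟩⟩
    · rw [Finset.mem_erase, Finset.mem_powerset]
      constructor
      · obtain ⟨p⟩ := hreachU i j
        obtain ⟨w, hw, hwj⟩ := exists_bridge hjW hcl p hiW rfl
        exact Finset.ne_empty_of_mem (Finset.mem_filter.mpr ⟨hwj, w, hw, rfl⟩)
      · intro e he
        obtain ⟨heA, hex⟩ := Finset.mem_filter.mp he
        exact Finset.mem_filter.mpr ⟨hAE heA, hex⟩
    · have hsub1 : ∀ e ∈ F1 W A, ∀ x ∈ e, x ∈ W := fun e he => (Finset.mem_filter.mp he).2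
      have htr1 : ∀ {x : V}, x ∈ W → (HE (F1 W A)).Reachable i x := by
        intro x hx
        obtain ⟨p⟩ := (hWch x).mp hx
        refine (reach_transfer (S := {y : V | y ∈ W}) ?_ p (show i ∈ _ from hiW)).1
        intro a b hab hne ha
        obtain ⟨habA, hjab⟩ := Finset.mem_filter.mp hab
        have hbW : b ∈ W :=
          (hWch b).mpr (((hWch a).mp ha).trans (he_adj.mpr ⟨hab, hne⟩).reachable)
        refine ⟨hbW, Finset.mem_filter.mpr ⟨habA, ?_⟩⟩
        intro y hy
        rcases Sym2.mem_iff.mp hy with rfl | rfl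
        · exact ha
        · exact hbW
      rw [Finset.mem_filter, Finset.mem_powerset]
      constructor
      · intro e he
        obtain ⟨heA, hPp⟩ := Finset.mem_filter.mp he
        exact Finset.mem_filter.mpr ⟨hAE heA, hPp⟩
      · rw [kcomp_eq_one_iff hsub1]
        exact ⟨⟨i, hiW⟩, fun x hx y hy => (htr1 hx).symm.trans (htr1 hy)⟩
    · have hsub2 : ∀ e ∈ F2 W A, ∀ x ∈ e, x ∈ Finset.univ \ W := fun e he x hx =>
        Finset.mem_sdiff.mpr ⟨Finset.mem_univ _, (Finset.mem_filter.mp he).2 x hx⟩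
      have htr2 : ∀ {x : V}, x ∉ W → (HE (F2 W A)).Reachable x j := by
        intro x hx
        obtain ⟨p⟩ := hreachU x j
        exact reach_hub hcl (fun e he hPp => Finset.mem_filter.mpr ⟨he, hPp⟩) p hx rfl
      rw [Finset.mem_filter, Finset.mem_powerset]
      constructor
      · intro e he
        obtain ⟨heA, hPp⟩ := Finset.mem_filter.mp he
        exact Finset.mem_filter.mpr
          ⟨hAE heA, fun x hx => Finset.mem_sdiff.mpr ⟨Finset.mem_univ _, hPp x hx⟩⟩
      · rw [kcomp_eq_one_iff hsub2]
        refine ⟨⟨j, Finset.mem_sdiff.mpr ⟨Finset.mem_univ _, hjW⟩⟩, fun x hx y hy => ?_⟩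
        exact (htr2 (Finset.mem_sdiff.mp hx).2).trans (htr2 (Finset.mem_sdiff.mp hy).2).symm
  · -- backward membership
    rintro ⟨B, A1, A2⟩ hp
    simp only [Finset.mem_product] at hp
    obtain ⟨hB, hA1, hA2⟩ := hp
    rw [Finset.mem_erase, Finset.mem_powerset] at hB
    rw [Finset.mem_filter, Finset.mem_powerset] at hA1 hA2
    obtain ⟨hBne, hBsub⟩ := hB
    obtain ⟨hA1sub, hk1⟩ := hA1
    obtain ⟨hA2sub, hk2⟩ := hA2
    have hBprop : ∀ e ∈ B, ∃ x ∈ W, e = s(x, j) :=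
      fun e he => (Finset.mem_filter.mp (hBsub he)).2
    have hBE : ∀ e ∈ B, e ∈ G.edgeFinset := fun e he => (Finset.mem_filter.mp (hBsub he)).1
    have hA1prop : ∀ e ∈ A1, ∀ x ∈ e, x ∈ W :=
      fun e he => (Finset.mem_filter.mp (hA1sub he)).2
    have hA1E : ∀ e ∈ A1, e ∈ G.edgeFinset := fun e he => (Finset.mem_filter.mp (hA1sub he)).1
    have hA2prop' : ∀ e ∈ A2, ∀ x ∈ e, x ∈ Finset.univ \ W :=
      fun e he => (Finset.mem_filter.mp (hA2sub he)).2
    have hA2prop : ∀ e ∈ A2, ∀ x ∈ e, x ∉ W :=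
      fun e he x hx => (Finset.mem_sdiff.mp (hA2prop' e he x hx)).2
    have hA2E : ∀ e ∈ A2, e ∈ G.edgeFinset := fun e he => (Finset.mem_filter.mp (hA2sub he)).1
    have hr1 : ∀ x ∈ W, ∀ y ∈ W, (HE A1).Reachable x y :=
      ((kcomp_eq_one_iff hA1prop).mp hk1).2
    have hr2 := ((kcomp_eq_one_iff hA2prop').mp hk2).2
    have hUsubE : ∀ e ∈ B ∪ A1 ∪ A2, e ∈ G.edgeFinset := by
      intro e he
      rcases Finset.mem_union.mp he with he' | he'
      · rcases Finset.mem_union.mp he' with he'' | he''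
        · exact hBE e he''
        · exact hA1E e he''
      · exact hA2E e he'
    have hmono1 : HE A1 ≤ HE (B ∪ A1 ∪ A2) :=
      SimpleGraph.fromEdgeSet_mono
        (Finset.coe_subset.mpr (Finset.subset_union_right.trans Finset.subset_union_left))
    have hmono2 : HE A2 ≤ HE (B ∪ A1 ∪ A2) :=
      SimpleGraph.fromEdgeSet_mono (Finset.coe_subset.mpr Finset.subset_union_right)
    have hBU : B ⊆ B ∪ A1 ∪ A2 := Finset.subset_union_left.trans Finset.subset_union_left
    have hri : ∀ x : V, (HE (B ∪ A1 ∪ A2)).Reachable x i := by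
      intro x
      by_cases hx : x ∈ W
      · exact (hr1 x hx i hiW).mono hmono1
      · obtain ⟨e, heB⟩ := Finset.nonempty_of_ne_empty hBne
        obtain ⟨w, hw, rfl⟩ := hBprop e heB
        have hxmem : x ∈ Finset.univ \ W := Finset.mem_sdiff.mpr ⟨Finset.mem_univ _, hx⟩
        have hjmem : j ∈ Finset.univ \ W := Finset.mem_sdiff.mpr ⟨Finset.mem_univ _, hjW⟩
        have hxj : (HE (B ∪ A1 ∪ A2)).Reachable x j := (hr2 x hxmem j hjmem).mono hmono2
        have hadj : (HE (B ∪ A1 ∪ A2)).Adj j w :=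
          he_adj.mpr ⟨by rw [Sym2.eq_swap]; exact hBU heB, fun h => hjW (h ▸ hw)⟩
        exact hxj.trans (hadj.reachable.trans ((hr1 w hw i hiW).mono hmono1))
    have hkU : kcomp Finset.univ (B ∪ A1 ∪ A2) = 1 := by
      rw [kcomp_eq_one_iff (fun e _ x _ => Finset.mem_univ x)]
      exact ⟨⟨i, Finset.mem_univ i⟩, fun x _ y _ => (hri x).trans (hri y).symm⟩
    have hWofU : Wof i j (B ∪ A1 ∪ A2) = W := by
      ext x
      rw [mem_Wof]
      constructor
      · intro hr
        obtain ⟨p⟩ := hr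
        refine (reach_transfer (S := {y : V | y ∈ W}) (A' := A1) ?_ p
          (show i ∈ _ from hiW)).2
        intro a b hab hne ha
        obtain ⟨habU, hjab⟩ := Finset.mem_filter.mp hab
        rcases Finset.mem_union.mp habU with h' | h'
        · rcases Finset.mem_union.mp h' with h'' | h''
          · obtain ⟨x', hx', heq⟩ := hBprop _ h''
            exact (hjab (by rw [heq]; exact Sym2.mem_mk_right x' j)).elim
          · exact ⟨hA1prop _ h'' b (Sym2.mem_mk_right a b), h''⟩
        · exact ((hA2prop _ h' a (Sym2.mem_mk_left a b)) ha).elim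
      · intro hx
        have hA1Aj : A1 ⊆ (B ∪ A1 ∪ A2).filter (fun e => j ∉ e) := by
          intro e he
          refine Finset.mem_filter.mpr
            ⟨Finset.mem_union.mpr (Or.inl (Finset.mem_union.mpr (Or.inr he))), fun hj2 => ?_⟩
          exact hjW (hA1prop e he j hj2)
        exact (hr1 i hiW x hx).mono
          (SimpleGraph.fromEdgeSet_mono (Finset.coe_subset.mpr hA1Aj))
    refine Finset.mem_filter.mpr ⟨Finset.mem_filter.mpr ⟨Finset.mem_powerset.mpr ?_, hkU⟩, hWofU⟩
    intro e he
    exact Finset.mem_filter.mpr ⟨hUsubE e he, fun x _ => Finset.mem_univ x⟩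
  · -- left inverse
    intro A hA
    exact (hfw A hA).2.2.2.2
  · -- right inverse
    rintro ⟨B, A1, A2⟩ hp
    simp only [Finset.mem_product] at hp
    obtain ⟨hB, hA1, hA2⟩ := hp
    rw [Finset.mem_erase, Finset.mem_powerset] at hB
    rw [Finset.mem_filter, Finset.mem_powerset] at hA1 hA2
    have hBprop : ∀ e ∈ B, ∃ x ∈ W, e = s(x, j) :=
      fun e he => (Finset.mem_filter.mp (hB.2 he)).2
    have hA1prop : ∀ e ∈ A1, ∀ x ∈ e, x ∈ W :=
      fun e he => (Finset.mem_filter.mp (hA1.1 he)).2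
    have hA2prop : ∀ e ∈ A2, ∀ x ∈ e, x ∉ W := fun e he x hx =>
      (Finset.mem_sdiff.mp ((Finset.mem_filter.mp (hA2.1 he)).2 x hx)).2
    simp only [Prod.mk.injEq]
    refine ⟨?_, ?_, ?_⟩
    · ext e
      simp only [Bf, Finset.mem_filter, Finset.mem_union]
      constructor
      · rintro ⟨(h | h) | h, x, hx, rfl⟩
        · exact h
        · exact absurd (hA1prop _ h j (Sym2.mem_mk_right x j)) hjW
        · exact absurd hx (hA2prop _ h x (Sym2.mem_mk_left x j))
      · intro h
        exact ⟨Or.inl (Or.inl h), hBprop e h⟩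
    · ext e
      simp only [F1, Finset.mem_filter, Finset.mem_union]
      constructor
      · rintro ⟨(h | h) | h, hPp⟩
        · obtain ⟨x, hx, rfl⟩ := hBprop e h
          exact absurd (hPp j (Sym2.mem_mk_right x j)) hjW
        · exact h
        · obtain ⟨y, hy⟩ := sym2_exists_mem e
          exact absurd (hPp y hy) (hA2prop e h y hy)
      · intro h
        exact ⟨Or.inl (Or.inr h), hA1prop e h⟩
    · ext e
      simp only [F2, Finset.mem_filter, Finset.mem_union]
      constructor
      · rintro ⟨(h | h) | h, hPp⟩
        · obtain ⟨x, hx, rfl⟩ := hBprop e h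
          exact absurd hx (hPp x (Sym2.mem_mk_left x j))
        · obtain ⟨y, hy⟩ := sym2_exists_mem e
          exact absurd (hA1prop e h y hy) (hPp y hy)
        · exact h
      · intro h
        exact ⟨Or.inr h, hA2prop e h⟩
  · -- values
    intro A hA
    obtain ⟨-, -, -, -, hU⟩ := hfw A hA
    have hd1 : Disjoint (Bf W j A) (F1 W A) := by
      rw [Finset.disjoint_left]
      intro e he1 he2
      obtain ⟨-, x, hx, rfl⟩ := Finset.mem_filter.mp he1
      exact hjW ((Finset.mem_filter.mp he2).2 j (Sym2.mem_mk_right x j))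
    have hd2 : Disjoint (Bf W j A ∪ F1 W A) (F2 W A) := by
      rw [Finset.disjoint_union_left]
      constructor
      · rw [Finset.disjoint_left]
        intro e he1 he2
        obtain ⟨-, x, hx, rfl⟩ := Finset.mem_filter.mp he1
        exact (Finset.mem_filter.mp he2).2 x (Sym2.mem_mk_left x j) hx
      · rw [Finset.disjoint_left]
        intro e he1 he2
        obtain ⟨y, hy⟩ := sym2_exists_mem e
        exact (Finset.mem_filter.mp he2).2 y hy ((Finset.mem_filter.mp he1).2 y hy)
    conv_lhs => rw [← hU]
    rw [Finset.prod_union hd2, Finset.prod_union hd1]
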